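/- For any solution u of −u'' = y on [0,1] with y continuous and boundary conditions u(0)=0 and βu'(1)+u(η)=α, where β>0 and η∈(0,1), one has the representation u(t) = (t/(β+η))α + (βt/(β+η))∫₀¹ y(s)ds + (t/(β+η))∫₀^η (η−s)y(s)ds − ∫₀^t (t−s)y(s)ds. -/

import Mathlib

open Set intervalIntegral

theorem aux_int_thermostat (z : ℝ → ℝ) (hz : Continuous z) (a : ℝ) :
    ∫ s in (0:ℝ)..a, (a - s) * z s
      = a * (∫ s in (0:ℝ)..a, z s) - ∫ s in (0:ℝ)..a, s * z s := by
  have h1 : Continuous fun s : ℝ => a * z s := continuous_const.mul hz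
  have h2 : Continuous fun s : ℝ => s * z s := continuous_id.mul hz
  have : (fun s : ℝ => (a - s) * z s) = fun s => a * z s - s * z s := by
    ext s; ring
  rw [this, integral_sub (h1.intervalIntegrable _ _) (h2.intervalIntegrable _ _),
    integral_const_mul]

/-- Representation formula for solutions of `-u'' = y` on `[0,1]` with
`u(0) = 0` and `β u'(1) + u(η) = α`. -/
theorem solution_representation_thermostat
    (β η A : ℝ) (hβ : 0 < β) (hη : η ∈ Ioo (0:ℝ) 1)
    (u u' y : ℝ → ℝ) (hy : ContinuousOn y (Icc (0:ℝ) 1))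
    (hu' : ∀ t ∈ Icc (0:ℝ) 1, HasDerivAt u (u' t) t)
    (hu'' : ∀ t ∈ Icc (0:ℝ) 1, HasDerivAt u' (-(y t)) t)
    (hbc0 : u 0 = 0)
    (hbc1 : β * u' 1 + u η = A) :
    ∀ t ∈ Icc (0:ℝ) 1,
      u t = (t / (β + η)) * A + (β * t / (β + η)) * (∫ s in (0:ℝ)..1, y s)
        + (t / (β + η)) * (∫ s in (0:ℝ)..η, (η - s) * y s)
        - ∫ s in (0:ℝ)..t, (t - s) * y s := by
  -- continuous extension of `y` to all of `ℝ` by clamping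
  set z : ℝ → ℝ := fun x => y (min 1 (max 0 x)) with hzdef
  have hclamp : ∀ x : ℝ, min 1 (max 0 x) ∈ Icc (0:ℝ) 1 := fun x =>
    ⟨le_min zero_le_one (le_max_left 0 x), min_le_left _ _⟩
  have hz : Continuous z :=
    hy.comp_continuous (continuous_const.min (continuous_const.max continuous_id)) hclamp
  have hzy : ∀ t ∈ Icc (0:ℝ) 1, z t = y t := by
    intro t ht
    simp only [hzdef, max_eq_right ht.1, min_eq_right ht.2]
  -- FTC derivatives of the primitives of `z` and `s ↦ s * z s`
  have intZ : ∀ b : ℝ, HasDerivAt (fun u => ∫ x in (0:ℝ)..u, z x) (z b) b := fun b =>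
    integral_hasDerivAt_right (hz.intervalIntegrable _ _)
      hz.aestronglyMeasurable.stronglyMeasurableAtFilter hz.continuousAt
  have hz2 : Continuous fun s : ℝ => s * z s := continuous_id.mul hz
  have intZ2 : ∀ b : ℝ, HasDerivAt (fun u => ∫ x in (0:ℝ)..u, x * z x) (b * z b) b := fun b =>
    integral_hasDerivAt_right (hz2.intervalIntegrable _ _)
      hz2.aestronglyMeasurable.stronglyMeasurableAtFilter hz2.continuousAt
  -- Step A : u' t = u' 0 - ∫₀ᵗ z
  have stepA : ∀ t ∈ Icc (0:ℝ) 1, u' t = u' 0 - ∫ s in (0:ℝ)..t, z s := by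
    apply eq_of_has_deriv_right_eq (f' := fun t => -(z t)) (a := 0) (b := 1)
    · intro x hx
      have hx' : x ∈ Icc (0:ℝ) 1 := Ico_subset_Icc_self hx
      have := (hu'' x hx').hasDerivWithinAt (s := Ici x)
      rwa [← hzy x hx'] at this
    · intro x _
      exact ((intZ x).const_sub (u' 0)).hasDerivWithinAt
    · exact fun x hx => (hu'' x hx).continuousAt.continuousWithinAt
    · exact fun x _ => (((intZ x).const_sub (u' 0)).continuousAt).continuousWithinAt
    · simp
  -- Step B : u t = u' 0 * t - (t * ∫₀ᵗ z - ∫₀ᵗ s z s)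
  have stepB : ∀ t ∈ Icc (0:ℝ) 1,
      u t = u' 0 * t - (t * (∫ s in (0:ℝ)..t, z s) - ∫ s in (0:ℝ)..t, s * z s) := by
    apply eq_of_has_deriv_right_eq (f' := u') (a := 0) (b := 1)
    · intro x hx
      exact (hu' x (Ico_subset_Icc_self hx)).hasDerivWithinAt
    · intro x hx
      have hx' : x ∈ Icc (0:ℝ) 1 := Ico_subset_Icc_self hx
      have h := (((hasDerivAt_id x).const_mul (u' 0)).sub
        (((hasDerivAt_id x).mul (intZ x)).sub (intZ2 x))).hasDerivWithinAt (s := Ici x)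
      have heq : u' x = u' 0 * 1 - (1 * (∫ s in (0:ℝ)..x, z s) + x * z x - x * z x) := by
        rw [stepA x hx']; ring
      rw [heq]
      exact h
    · exact fun x hx => (hu' x hx).continuousAt.continuousWithinAt
    · intro x _
      exact ((((hasDerivAt_id x).const_mul (u' 0)).sub
        (((hasDerivAt_id x).mul (intZ x)).sub (intZ2 x))).continuousAt).continuousWithinAt
    · simp [hbc0]
  -- integrals of `y` coincide with integrals of `z`
  have hcong : ∀ t ∈ Icc (0:ℝ) 1,
      (∫ s in (0:ℝ)..t, (t - s) * y s) = ∫ s in (0:ℝ)..t, (t - s) * z s := by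
    intro t ht
    apply integral_congr
    intro s hs
    rw [uIcc_of_le ht.1] at hs
    show (t - s) * y s = (t - s) * z s
    rw [hzy s ⟨hs.1, hs.2.trans ht.2⟩]
  have hcong1 : (∫ s in (0:ℝ)..1, y s) = ∫ s in (0:ℝ)..1, z s := by
    apply integral_congr
    intro s hs
    rw [uIcc_of_le zero_le_one] at hs
    rw [hzy s hs]
  have hηI : η ∈ Icc (0:ℝ) 1 := ⟨hη.1.le, hη.2.le⟩
  -- the value of u' 0
  have hβη : β + η ≠ 0 := ne_of_gt (by linarith [hη.1])
  have hc : u' 0 * (β + η) = A + β * (∫ s in (0:ℝ)..1, z s)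
      + (η * (∫ s in (0:ℝ)..η, z s) - ∫ s in (0:ℝ)..η, s * z s) := by
    have h1 := stepA 1 ⟨zero_le_one, le_refl 1⟩
    have h2 := stepB η hηI
    rw [h1, h2] at hbc1
    linarith [hbc1]
  intro t ht
  rw [stepB t ht, hcong t ht, hcong1, aux_int_thermostat z hz t]
  have hη2 : (∫ s in (0:ℝ)..η, (η - s) * y s) = η * (∫ s in (0:ℝ)..η, z s)
      - ∫ s in (0:ℝ)..η, s * z s := by
    rw [← aux_int_thermostat z hz η]
    apply integral_congr
    intro s hs
    rw [uIcc_of_le hη.1.le] at hs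
    show (η - s) * y s = (η - s) * z s
    rw [hzy s ⟨hs.1, hs.2.trans hη.2.le⟩]
  rw [hη2]
  have hc' : u' 0 = (A + β * (∫ s in (0:ℝ)..1, z s)
      + (η * (∫ s in (0:ℝ)..η, z s) - ∫ s in (0:ℝ)..η, s * z s)) / (β + η) := by
    field_simp at hc ⊢
    linarith [hc]
  rw [hc']
  field_simp
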